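/- For every (x_h, y_h) ∈ ℝ² with (x_h, y_h) ≠ (0,0), one has the limit lim_{μ → 1⁻} (1−μ)^{−2/3} · [ Ω_μ( μ + (1−μ)^{1/3} x_h , (1−μ)^{1/3} y_h ) − 3/2 ] = (3/2)·x_h² + 1/√(x_h² + y_h²), i.e. the rescaled RTBP effective potential converges to the Hill potential Ψ(x_h,y_h) = (3/2)x_h² + 1/√(x_h²+y_h²) as the mass parameter μ tends to 1. -/

import Mathlib

open Real Set Filter

noncomputable section

/-- The effective potential `Ω_μ` of the planar circular restricted three-body problem
in rotating (synodical) coordinates. -/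
def Omega (μ x y : ℝ) : ℝ :=
  (x^2+y^2)/2 + (1-μ)/Real.sqrt ((x-μ)^2+y^2) + μ/Real.sqrt ((x-μ+1)^2+y^2)
    + μ*(1-μ)/2

/-- Auxiliary: rescaled distance to the second primary. -/
def hillR (xh yh δ : ℝ) : ℝ := Real.sqrt (1 + 2*δ*xh + δ^2*(xh^2+yh^2))

/-- Auxiliary polynomial (second-order Taylor polynomial of `1/hillR`). -/
def hillP (xh yh δ : ℝ) : ℝ := 1 - δ*xh + δ^2*((3/2)*xh^2 - (xh^2+yh^2)/2)

/-- Auxiliary polynomial: `1 - (1+2δx+δ²(x²+y²)) * (hillP)² = δ³ * hillQ`. -/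
def hillQ (xh yh δ : ℝ) : ℝ :=
  let s := xh^2+yh^2
  let c := (3/2)*xh^2 - s/2
  (2*xh*c - 8*xh^3 + 4*xh*s) + (4*xh^2*c - c^2 - 4*xh^2*s + s^2)*δ
    + (2*xh*c*(s - c))*δ^2 + (-s*c^2)*δ^3

/-- Auxiliary: the rescaled potential as a nice (continuous at `0`) function of
`δ = (1-μ)^{1/3}`. -/
def hillG (xh yh δ : ℝ) : ℝ :=
  (xh^2+yh^2)/2 + 1/Real.sqrt (xh^2+yh^2) - δ/2 - δ^2*xh
    + ((3/2)*xh^2 - (xh^2+yh^2)/2) - δ * hillP xh yh δ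
    + (1-δ^3)*δ*hillQ xh yh δ / (hillR xh yh δ * (1 + hillR xh yh δ * hillP xh yh δ))

theorem hillR_continuous (xh yh : ℝ) : Continuous (hillR xh yh) := by
  unfold hillR
  exact Real.continuous_sqrt.comp (by continuity)

theorem hillP_continuous (xh yh : ℝ) : Continuous (hillP xh yh) := by
  unfold hillP; continuity

theorem hillQ_continuous (xh yh : ℝ) : Continuous (hillQ xh yh) := by
  unfold hillQ; continuity

theorem hillR_zero (xh yh : ℝ) : hillR xh yh 0 = 1 := by
  simp [hillR]

theorem hillP_eq (xh yh δ : ℝ) :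
    hillP xh yh δ = 1 - δ*xh + δ^2*((3/2)*xh^2 - (xh^2+yh^2)/2) := rfl

theorem hillP_zero (xh yh : ℝ) : hillP xh yh 0 = 1 := by
  simp [hillP]

theorem hillG_continuousAt (xh yh : ℝ) : ContinuousAt (hillG xh yh) 0 := by
  unfold hillG
  have hden : ContinuousAt
      (fun δ => hillR xh yh δ * (1 + hillR xh yh δ * hillP xh yh δ)) 0 :=
    ((hillR_continuous xh yh).mul
      (continuous_const.add ((hillR_continuous xh yh).mul (hillP_continuous xh yh)))).continuousAt
  have hden0 : hillR xh yh 0 * (1 + hillR xh yh 0 * hillP xh yh 0) ≠ 0 := by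
    rw [hillR_zero, hillP_zero]; norm_num
  have hnum : ContinuousAt (fun δ : ℝ => (1-δ^3)*δ*hillQ xh yh δ) 0 := by
    exact (((continuous_const.sub (continuous_pow 3)).mul continuous_id).mul
      (hillQ_continuous xh yh)).continuousAt
  have h1 : ContinuousAt (fun δ : ℝ =>
      (xh^2+yh^2)/2 + 1/Real.sqrt (xh^2+yh^2) - δ/2 - δ^2*xh
        + ((3/2)*xh^2 - (xh^2+yh^2)/2) - δ * hillP xh yh δ) 0 := by
    exact (((((continuous_const.sub (continuous_id.div_const 2)).sub
      ((continuous_pow 2).mul continuous_const)).add continuous_const).sub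
      (continuous_id.mul (hillP_continuous xh yh))).continuousAt)
  exact h1.add (hnum.div hden hden0)

theorem hillG_zero (xh yh : ℝ) :
    hillG xh yh 0 = (3/2)*xh^2 + 1/Real.sqrt (xh^2+yh^2) := by
  simp [hillG]
  ring

set_option maxHeartbeats 1000000 in
/-- **Hill limit of the RTBP potential**: as `μ → 1⁻`, the rescaled effective potential
converges, at every point `(x_h,y_h) ≠ (0,0)`, to the Hill potential
`Ψ(x_h,y_h) = (3/2)x_h² + 1/√(x_h²+y_h²)`. -/
theorem hill_limit_of_potential (xh yh : ℝ) (h : (xh, yh) ≠ (0, 0)) :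
    Tendsto
      (fun μ : ℝ =>
        (Omega μ (μ + (1-μ)^((1:ℝ)/3)*xh) ((1-μ)^((1:ℝ)/3)*yh) - 3/2)
          / (1-μ)^((2:ℝ)/3))
      (nhdsWithin 1 (Set.Iio 1))
      (nhds ((3/2)*xh^2 + 1/Real.sqrt (xh^2+yh^2))) := by
  have hρsq : 0 < xh^2 + yh^2 := by
    have h2 : ¬(xh = 0 ∧ yh = 0) := by simpa [Prod.ext_iff] using h
    rcases not_and_or.mp h2 with h' | h' <;> positivity
  have hρ : 0 < Real.sqrt (xh^2 + yh^2) := Real.sqrt_pos.mpr hρsq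
  -- the substitution δ = (1-μ)^{1/3}
  have hmap : Tendsto (fun μ : ℝ => (1-μ)^((1:ℝ)/3))
      (nhdsWithin 1 (Set.Iio 1)) (nhdsWithin 0 (Set.Ioi 0)) := by
    rw [tendsto_nhdsWithin_iff]
    constructor
    · have h1 : Tendsto (fun μ : ℝ => 1 - μ) (nhdsWithin 1 (Set.Iio 1)) (nhds 0) := by
        have hc : Continuous (fun μ : ℝ => 1 - μ) := continuous_const.sub continuous_id
        simpa using (hc.tendsto 1).mono_left nhdsWithin_le_nhds
      have h2 : ContinuousAt (fun x : ℝ => x ^ ((1:ℝ)/3)) 0 :=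
        Real.continuousAt_rpow_const 0 _ (Or.inr (by norm_num))
      have := h2.tendsto.comp h1
      simpa [Function.comp_def, Real.zero_rpow (by norm_num : (1:ℝ)/3 ≠ 0)] using this
    · filter_upwards [self_mem_nhdsWithin] with μ (hμ : μ < 1)
      exact Real.rpow_pos_of_pos (by linarith) _
  -- eventual positivity facts along δ → 0⁺
  have hposS : ∀ᶠ δ in nhdsWithin (0:ℝ) (Set.Ioi 0), 0 < 1 + 2*δ*xh + δ^2*(xh^2+yh^2) := by
    have hc : ContinuousAt (fun δ : ℝ => 1 + 2*δ*xh + δ^2*(xh^2+yh^2)) 0 := by fun_prop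
    have := hc.tendsto.eventually (eventually_gt_nhds (by norm_num :
      (0:ℝ) < (fun δ : ℝ => 1 + 2*δ*xh + δ^2*(xh^2+yh^2)) 0))
    exact this.filter_mono nhdsWithin_le_nhds
  have hposD : ∀ᶠ δ in nhdsWithin (0:ℝ) (Set.Ioi 0),
      0 < 1 + hillR xh yh δ * hillP xh yh δ := by
    have hc : ContinuousAt (fun δ : ℝ => 1 + hillR xh yh δ * hillP xh yh δ) 0 :=
      (continuous_const.add ((hillR_continuous xh yh).mul (hillP_continuous xh yh))).continuousAt
    have := hc.tendsto.eventually (eventually_gt_nhds (by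
      show (0:ℝ) < 1 + hillR xh yh 0 * hillP xh yh 0
      rw [hillR_zero, hillP_zero]; norm_num :
      (0:ℝ) < (fun δ : ℝ => 1 + hillR xh yh δ * hillP xh yh δ) 0))
    exact this.filter_mono nhdsWithin_le_nhds
  -- main step: eventual equality with hillG ∘ δ
  have heq : ∀ᶠ μ in nhdsWithin (1:ℝ) (Set.Iio 1),
      (Omega μ (μ + (1-μ)^((1:ℝ)/3)*xh) ((1-μ)^((1:ℝ)/3)*yh) - 3/2) / (1-μ)^((2:ℝ)/3)
        = hillG xh yh ((1-μ)^((1:ℝ)/3)) := by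
    filter_upwards [hmap.eventually hposS, hmap.eventually hposD, self_mem_nhdsWithin]
      with μ hS hD (hμ : μ < 1)
    set δ := (1-μ)^((1:ℝ)/3) with hδdef
    have h1μ : (0:ℝ) < 1 - μ := by linarith
    have hδpos : 0 < δ := Real.rpow_pos_of_pos h1μ _
    have hδ3 : δ^3 = 1 - μ := by
      rw [hδdef, ← Real.rpow_natCast ((1-μ)^((1:ℝ)/3)) 3, ← Real.rpow_mul h1μ.le]
      norm_num
    have hδ2 : (1-μ)^((2:ℝ)/3) = δ^2 := by
      rw [hδdef, ← Real.rpow_natCast ((1-μ)^((1:ℝ)/3)) 2, ← Real.rpow_mul h1μ.le]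
      norm_num
    have hr1 : Real.sqrt ((μ + δ*xh - μ)^2 + (δ*yh)^2) = δ * Real.sqrt (xh^2+yh^2) := by
      have e : (μ + δ*xh - μ)^2 + (δ*yh)^2 = δ^2 * (xh^2+yh^2) := by ring
      rw [e, Real.sqrt_mul (sq_nonneg _), Real.sqrt_sq hδpos.le]
    have hr2 : Real.sqrt ((μ + δ*xh - μ + 1)^2 + (δ*yh)^2) = hillR xh yh δ := by
      unfold hillR; congr 1; ring
    have hRpos : 0 < hillR xh yh δ := Real.sqrt_pos.mpr hS
    have hR2 : (hillR xh yh δ)^2 = 1 + 2*δ*xh + δ^2*(xh^2+yh^2) := Real.sq_sqrt hS.le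
    have hμval : μ = 1 - δ^3 := by linarith
    have hQ : hillQ xh yh δ =
        (1 - (hillR xh yh δ)^2 * (hillP xh yh δ)^2) / δ^3 := by
      rw [hR2, eq_div_iff (by positivity : (δ:ℝ)^3 ≠ 0)]
      unfold hillP hillQ
      ring
    unfold Omega
    rw [hr1, hr2, hδ2, hμval, hillG, hQ]
    set R := hillR xh yh δ with hRdef
    set P := hillP xh yh δ with hPdef
    have key : (1-δ^3)/R
        = (1-δ^3)*P + (1-δ^3)*δ*((1 - R^2*P^2)/δ^3)/(R*(1+R*P))*δ^2 := by
      field_simp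
      ring
    rw [key]
    generalize (1-δ^3)*δ*((1 - R^2*P^2)/δ^3)/(R*(1+R*P)) = X
    rw [hPdef, hillP_eq]
    field_simp
    ring
  -- conclude
  have hlim : Tendsto (fun μ : ℝ => hillG xh yh ((1-μ)^((1:ℝ)/3)))
      (nhdsWithin 1 (Set.Iio 1)) (nhds ((3/2)*xh^2 + 1/Real.sqrt (xh^2+yh^2))) := by
    have := (hillG_continuousAt xh yh).tendsto.comp (hmap.mono_right nhdsWithin_le_nhds)
    rw [hillG_zero xh yh] at this
    exact this
  exact hlim.congr' (heq.mono fun _ e => e.symm)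

end
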